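/- If U and A are classes with U ⊆ A ⊆ S, A is Φ-closed for an inductive definition Φ on S, then for every proof w in the W-type W(g) (arising from a collection square over Φ as in the Set Compactness construction): if all assumptions of w belong to U, then the conclusion of w belongs to A. -/
import Mathlib


/-- The W-type associated to `g : D → C`. -/
inductive WT (C D : Type) (g : D → C) : Type
  | sup (c : C) (t : ∀ d : D, g d = c → WT C D g) : WT C D g

/-- `Ψ = {(X, a, b) : (X, a) ∈ Φ, b ∈ X}`. -/
def PsiT {S : Type} (Φ : Set (Set S × S)) : Type :=
  {t : (Set S × S) × S // t.1 ∈ Φ ∧ t.2 ∈ t.1.1}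

/-- The map `f : Ψ → Φ + S` obtained from the projection `Ψ → Φ` composed
with the sum inclusion. -/
def fmap {S : Type} (Φ : Set (Set S × S)) (t : PsiT Φ) :
    ({φ : Set S × S // φ ∈ Φ} ⊕ S) :=
  Sum.inl ⟨t.1.1, t.2.1⟩

section
variable {S : Type} {Φ : Set (Set S × S)} {C D : Type} (g : D → C)
  (p : C → ({φ : Set S × S // φ ∈ Φ} ⊕ S)) (q : D → PsiT Φ)

/-- The conclusion of a tree in `W(g)`. -/
def conc : WT C D g → S
  | .sup c _ => Sum.elim (fun φ => φ.1.2) (fun s => s) (p c)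

/-- The set of assumptions of a tree in `W(g)`. -/
def ass : WT C D g → Set S
  | .sup c t =>
      Sum.elim (fun _ => {s | ∃ (d : D) (h : g d = c), s ∈ ass (t d h)})
        (fun s => {s}) (p c)

/-- A tree is a proof if it and all its subtrees are well-formed. -/
def isProof : WT C D g → Prop
  | .sup c t =>
      (∀ φ : {φ : Set S × S // φ ∈ Φ}, p c = Sum.inl φ →
        ∀ (d : D) (h : g d = c), conc g p (t d h) = (q d).1.2) ∧
      ∀ (d : D) (h : g d = c), isProof (t d h)

end

/-- `A` is `Φ`-closed. -/
def PhiClosed {S : Type} (Φ : Set (Set S × S)) (A : Set S) : Prop :=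
  ∀ (X : Set S) (a : S), (X, a) ∈ Φ → X ⊆ A → a ∈ A

/-- if `U ⊆ A ⊆ S` with `A` Φ-closed, then for every proof `w`
in the W-type `W(g)` arising from a collection square over `f : Ψ → Φ + S`:
if all assumptions of `w` belong to `U`, then the conclusion of `w` is in `A`. -/
theorem stmt_15 {S : Type} (Φ : Set (Set S × S)) {C D : Type}
    (g : D → C) (p : C → ({φ : Set S × S // φ ∈ Φ} ⊕ S)) (q : D → PsiT Φ)
    (hcomm : ∀ d : D, fmap Φ (q d) = p (g d))
    (hpsurj : Function.Surjective p)
    (hpb : ∀ (ψ : PsiT Φ) (c : C), fmap Φ ψ = p c → ∃ d, q d = ψ ∧ g d = c)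
    (hcoll : ∀ (x : {φ : Set S × S // φ ∈ Φ} ⊕ S) (E : Type)
      (e : E → {ψ : PsiT Φ // fmap Φ ψ = x}), Function.Surjective e →
      ∃ c : C, p c = x ∧ ∃ h : {d : D // g d = c} → E,
        ∀ d : {d : D // g d = c}, ((e (h d)) : {ψ : PsiT Φ // fmap Φ ψ = x}).1 = q d.1)
    (U A : Set S) (hUA : U ⊆ A) (hA : PhiClosed Φ A) :
    ∀ w : WT C D g, isProof g p q w → ass g p w ⊆ U → conc g p w ∈ A := by
  intro w
  induction w with
  | sup c t ih =>
    intro hpf hass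
    obtain ⟨hwf, hsub⟩ := hpf
    cases hp : p c with
    | inl φ =>
      have hconc : conc g p (.sup c t) = φ.1.2 := by
        simp [conc, hp]
      have hassE : ass g p (.sup c t)
          = {s | ∃ (d : D) (h : g d = c), s ∈ ass g p (t d h)} := by
        simp [ass, hp]
      rw [hconc]
      refine hA φ.1.1 φ.1.2 (by simpa using φ.2) ?_
      intro b hb
      obtain ⟨d, hqd, hgd⟩ := hpb ⟨(φ.1, b), φ.2, hb⟩ c (by simp [fmap, hp])
      have hc : conc g p (t d hgd) = b := by
        rw [hwf φ hp d hgd, hqd]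
      rw [← hc]
      refine ih d hgd (hsub d hgd) ?_
      intro s hs
      exact hass (by rw [hassE]; exact ⟨d, hgd, hs⟩)
    | inr s =>
      have hconc : conc g p (.sup c t) = s := by simp [conc, hp]
      have : s ∈ U := hass (by simp [ass, hp])
      rw [hconc]; exact hUA this
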